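/- arXiv:1508.04938 — 6 statements merged into one kernel-verified Lean document; each statement's English description precedes it below -/
import Mathlib

section
/- Let A and B be continuous linear operators on a complex Hilbert space and let ψ₀ be a vector. Define the sequence (ψ_n) by ψ₁ = A ψ₀ and ψ_n = (1/n)(A ψ_{n-1} + B ψ_{n-2}) for n ≥ 2. Then the power series Σ_{n≥0} ψ_n sⁿ converges absolutely for every s ∈ ℂ (i.e. Σ_{n≥0} ‖ψ_n‖ |s|ⁿ < ∞), and the function ψ(s) = Σ_{n≥0} ψ_n sⁿ defined for real s is differentiable and satisfies dψ/ds = (A + sB) ψ(s) with ψ(0) = ψ₀. -/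
theorem aux1 (c : ℝ) : Summable (fun k : ℕ => (k:ℝ) * c^k / (Nat.factorial k)) := by
  have h : Summable (fun n : ℕ => c * (c^n/(Nat.factorial n))) := (Real.summable_pow_div_factorial c).mul_left c
  refine (summable_nat_add_iff 1).1 (h.congr fun n => ?_)
  rw [Nat.factorial_succ]
  have h2 : ((Nat.factorial n) : ℝ) ≠ 0 := by positivity
  push_cast
  field_simp
  ring

theorem aux2 (c : ℝ) : Summable (fun n : ℕ => c^n / (Nat.factorial (n/2))) := by
  apply Summable.even_add_odd
  · refine ((Real.summable_pow_div_factorial (c^2)).congr fun k => ?_)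
    rw [show 2*k/2 = k from by omega, ← pow_mul]
  · refine (((Real.summable_pow_div_factorial (c^2)).mul_left c).congr fun k => ?_)
    rw [show (2*k+1)/2 = k from by omega]
    ring

theorem aux3 (c : ℝ) : Summable (fun n : ℕ => (n:ℝ) * c^n / (Nat.factorial (n/2))) := by
  apply Summable.even_add_odd
  · refine (((aux1 (c^2)).mul_left 2).congr fun k => ?_)
    rw [show 2*k/2 = k from by omega]
    push_cast; ring
  · refine ((((aux1 (c^2)).mul_left (2*c)).add ((Real.summable_pow_div_factorial (c^2)).mul_left c)).congr fun k => ?_)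
    rw [show (2*k+1)/2 = k from by omega]
    push_cast; ring

theorem aux4 (u : ℕ → ℝ) (a b : ℝ) (ha : 0 ≤ a) (hb : 0 ≤ b) (hnn : ∀ n, 0 ≤ u n)
    (hrec : ∀ n : ℕ, u (n+2) ≤ ((n:ℝ)+2)⁻¹ * (a * u (n+1) + b * u n)) :
    ∀ n, u n ≤ (max (u 0) (u 1)) * (max 1 (a+b))^n / (Nat.factorial (n/2)) := by
  set K := max (u 0) (u 1) with hK
  set M := max 1 (a+b) with hM
  have hK0 : 0 ≤ K := le_trans (hnn 0) (le_max_left _ _)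
  have hM1 : (1:ℝ) ≤ M := le_max_left _ _
  have hM0 : 0 < M := lt_of_lt_of_le one_pos hM1
  have hab : a + b ≤ M := le_max_right _ _
  intro n
  induction n using Nat.strong_induction_on with
  | _ n ih =>
    match n with
    | 0 =>
      have h0 : u 0 ≤ K := le_max_left _ _
      simpa using h0
    | 1 =>
      have h1 : u 1 ≤ K := le_max_right _ _
      simpa using h1.trans (le_mul_of_one_le_right hK0 hM1)
    | (n+2) =>
      have ih1 := ih (n+1) (by omega)
      have ih0 := ih n (by omega)
      set j := n / 2 with hj
      have hfj : (0:ℝ) < (Nat.factorial j : ℝ) := by positivity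
      have hjle : (Nat.factorial j : ℝ) ≤ (Nat.factorial ((n+1)/2) : ℝ) := by
        exact_mod_cast Nat.factorial_le (by omega)
      have hb1 : u (n+1) ≤ K * M^(n+1) / (Nat.factorial j) := by
        refine le_trans ih1 ?_
        gcongr
      have hb0 : u n ≤ K * M^(n+1) / (Nat.factorial j) := by
        refine le_trans ih0 ?_
        gcongr
        · omega
      have hn2 : (0:ℝ) < (n:ℝ) + 2 := by positivity
      have hjn : (j:ℝ) + 1 ≤ (n:ℝ) + 2 := by
        have h : j ≤ n := by omega
        have := (Nat.cast_le (α := ℝ)).mpr h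
        linarith
      calc u (n+2) ≤ ((n:ℝ)+2)⁻¹ * (a * u (n+1) + b * u n) := hrec n
        _ ≤ ((n:ℝ)+2)⁻¹ * (a * (K * M^(n+1) / (Nat.factorial j)) + b * (K * M^(n+1) / (Nat.factorial j))) := by
            gcongr
        _ = (a + b) * (K * M^(n+1)) / (((n:ℝ)+2) * (Nat.factorial j)) := by
            field_simp
        _ ≤ M * (K * M^(n+1)) / (((j:ℝ)+1) * (Nat.factorial j)) := by
            gcongr
        _ = K * M^(n+2) / (Nat.factorial ((n+2)/2)) := by
            rw [show (n+2)/2 = j + 1 from by omega, Nat.factorial_succ]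
            push_cast
            ring

/-- Let `A`, `B` be continuous linear operators on a complex Hilbert space
and `ψ 0` a vector.  Define `ψ 1 = A (ψ 0)` and `ψ n = (1/n) (A (ψ (n-1)) + B (ψ (n-2)))`
for `n ≥ 2`.  Then the power series `∑ ψ n • sⁿ` converges absolutely for every `s : ℂ`,
and the function `s ↦ ∑' n, sⁿ • ψ n` (for real `s`) satisfies `ψ(0) = ψ 0` and the ODE
`dψ/ds = (A + s B) ψ(s)`. -/
theorem stmt_0 {H : Type*} [NormedAddCommGroup H] [InnerProductSpace ℂ H] [CompleteSpace H]
    (A B : H →L[ℂ] H) (ψ : ℕ → H)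
    (hψ1 : ψ 1 = A (ψ 0))
    (hψrec : ∀ n : ℕ, 2 ≤ n → ψ n = ((n : ℂ))⁻¹ • (A (ψ (n - 1)) + B (ψ (n - 2)))) :
    (∀ s : ℂ, Summable fun n : ℕ => ‖ψ n‖ * ‖s‖ ^ n) ∧
    (∀ f : ℝ → H, f = (fun s : ℝ => ∑' n : ℕ, (s : ℂ) ^ n • ψ n) →
      f 0 = ψ 0 ∧ ∀ s : ℝ, HasDerivAt f ((A + (s : ℂ) • B) (f s)) s) := by
  -- the basic norm bound
  have hrec' : ∀ n : ℕ, ‖ψ (n+2)‖ ≤ ((n:ℝ)+2)⁻¹ * (‖A‖ * ‖ψ (n+1)‖ + ‖B‖ * ‖ψ n‖) := by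
    intro n
    rw [hψrec (n+2) (by omega)]
    rw [show n+2-1 = n+1 from by omega, show n+2-2 = n from by omega]
    rw [norm_smul, norm_inv]
    have h1 : ‖((n+2 : ℕ) : ℂ)‖ = (n:ℝ)+2 := by
      rw [Complex.norm_natCast]; push_cast; ring
    rw [h1]
    gcongr
    exact (norm_add_le _ _).trans (add_le_add (A.le_opNorm _) (B.le_opNorm _))
  set K := max ‖ψ 0‖ ‖ψ 1‖ with hKdef
  set M := max 1 (‖A‖+‖B‖) with hMdef
  have key : ∀ n, ‖ψ n‖ ≤ K * M^n / (Nat.factorial (n/2)) :=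
    aux4 (fun n => ‖ψ n‖) ‖A‖ ‖B‖ (norm_nonneg _) (norm_nonneg _) (fun n => norm_nonneg _) hrec'
  have hK0 : 0 ≤ K := le_trans (norm_nonneg _) (le_max_left _ _)
  have hM1 : (1:ℝ) ≤ M := le_max_left _ _
  have hM0 : 0 < M := lt_of_lt_of_le one_pos hM1
  -- part 1
  have part1 : ∀ s : ℂ, Summable fun n : ℕ => ‖ψ n‖ * ‖s‖ ^ n := by
    intro s
    refine Summable.of_nonneg_of_le (fun n => by positivity) (fun n => ?_)
      (((aux2 (M*‖s‖)).mul_left K).congr fun n => rfl)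
    have hF : (0:ℝ) < (Nat.factorial (n/2) : ℝ) := by positivity
    calc ‖ψ n‖ * ‖s‖^n ≤ (K * M^n / (Nat.factorial (n/2))) * ‖s‖^n := by
          gcongr; exact key n
      _ = K * ((M*‖s‖)^n / (Nat.factorial (n/2))) := by
          rw [mul_pow]; field_simp
  refine ⟨part1, ?_⟩
  rintro f rfl
  constructor
  · -- value at 0
    have : ∀ (n : ℕ), n ≠ 0 → (((0:ℝ) : ℂ)) ^ n • ψ n = 0 := by
      intro n hn
      simp [zero_pow hn]
    show (∑' n : ℕ, (((0:ℝ) : ℂ)) ^ n • ψ n) = ψ 0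
    rw [tsum_eq_single 0 this]
    simp
  · intro s
    set R : ℝ := |s| + 1 with hRdef
    have hR1 : (1:ℝ) ≤ R := by rw [hRdef]; have := abs_nonneg s; linarith
    have hR0 : (0:ℝ) < R := lt_of_lt_of_le one_pos hR1
    set C : ℝ := M * R with hCdef
    have hC1 : (1:ℝ) ≤ C := by rw [hCdef]; nlinarith
    have hC0 : (0:ℝ) < C := lt_of_lt_of_le one_pos hC1
    have hu : Summable (fun n : ℕ => K * ((n:ℝ) * C^n / (Nat.factorial (n/2)))) :=
      (aux3 C).mul_left K
    have hg : ∀ (n : ℕ) (y : ℝ), HasDerivAt (fun y : ℝ => ((y : ℂ))^n • ψ n)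
        ((((n : ℕ) : ℂ) * ((y:ℂ))^(n-1)) • ψ n) y := by
      intro n y
      exact ((hasDerivAt_pow n ((y : ℂ))).comp_ofReal).smul_const (ψ n)
    have hg' : ∀ (n : ℕ) (y : ℝ), y ∈ Set.Ioo (-R) R →
        ‖(((n : ℕ) : ℂ) * ((y:ℂ))^(n-1)) • ψ n‖ ≤ K * ((n:ℝ) * C^n / (Nat.factorial (n/2))) := by
      intro n y hy
      have hyR : |y| ≤ R := le_of_lt (abs_lt.2 ⟨hy.1, hy.2⟩)
      have hF : (0:ℝ) < (Nat.factorial (n/2) : ℝ) := by positivity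
      have h1 : ‖(((n : ℕ) : ℂ) * ((y:ℂ))^(n-1)) • ψ n‖ = (n:ℝ) * |y|^(n-1) * ‖ψ n‖ := by
        rw [norm_smul, norm_mul, norm_pow, Complex.norm_natCast, Complex.norm_real,
          Real.norm_eq_abs]
      rw [h1]
      calc (n:ℝ) * |y|^(n-1) * ‖ψ n‖
          ≤ (n:ℝ) * R^(n-1) * (K * M^n / (Nat.factorial (n/2))) := by
            gcongr
            exact key n
        _ ≤ (n:ℝ) * R^n * (K * M^n / (Nat.factorial (n/2))) := by
            gcongr
            · exact Nat.sub_le n 1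
        _ = K * ((n:ℝ) * C^n / (Nat.factorial (n/2))) := by
            rw [hCdef, mul_pow]; field_simp
    have hg0 : Summable (fun n : ℕ => (((0:ℝ):ℂ))^n • ψ n) := by
      apply summable_of_ne_finset_zero (s := ({0} : Finset ℕ))
      intro n hn
      simp only [Finset.mem_singleton] at hn
      simp [zero_pow hn]
    have hs_mem : s ∈ Set.Ioo (-R) R := by
      have h1 : |s| < R := by rw [hRdef]; linarith
      exact ⟨(abs_lt.1 h1).1, (abs_lt.1 h1).2⟩
    have h0_mem : (0:ℝ) ∈ Set.Ioo (-R) R := ⟨by linarith, by linarith⟩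
    have hDer := hasDerivAt_tsum_of_isPreconnected hu isOpen_Ioo
      (convex_Ioo (-R) R).isPreconnected (fun n y _ => hg n y) hg' h0_mem hg0 hs_mem
    have hsum' : Summable (fun n : ℕ => (((n:ℕ):ℂ) * ((s:ℂ))^(n-1)) • ψ n) :=
      Summable.of_norm_bounded hu (fun n => hg' n s hs_mem)
    have hT : Summable (fun n : ℕ => ((s:ℝ):ℂ)^n • ψ n) := by
      refine Summable.of_norm_bounded (part1 ((s:ℝ):ℂ)) (fun n => ?_)
      rw [norm_smul, norm_pow]; exact le_of_eq (mul_comm _ _)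
    have hA : Summable (fun n : ℕ => ((s:ℝ):ℂ)^n • A (ψ n)) := by
      refine Summable.of_norm_bounded ((part1 ((s:ℝ):ℂ)).mul_left ‖A‖) (fun n => ?_)
      rw [norm_smul, norm_pow]
      calc ‖((s:ℝ):ℂ)‖^n * ‖A (ψ n)‖ ≤ ‖((s:ℝ):ℂ)‖^n * (‖A‖ * ‖ψ n‖) := by
            gcongr; exact A.le_opNorm _
        _ = ‖A‖ * (‖ψ n‖ * ‖((s:ℝ):ℂ)‖^n) := by ring
    have hB : Summable (fun n : ℕ => ((s:ℝ):ℂ)^n • B (ψ n)) := by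
      refine Summable.of_norm_bounded ((part1 ((s:ℝ):ℂ)).mul_left ‖B‖) (fun n => ?_)
      rw [norm_smul, norm_pow]
      calc ‖((s:ℝ):ℂ)‖^n * ‖B (ψ n)‖ ≤ ‖((s:ℝ):ℂ)‖^n * (‖B‖ * ‖ψ n‖) := by
            gcongr; exact B.le_opNorm _
        _ = ‖B‖ * (‖ψ n‖ * ‖((s:ℝ):ℂ)‖^n) := by ring
    have hB' : Summable (fun n : ℕ => ((s:ℝ):ℂ)^(n+1) • B (ψ n)) := by
      refine Summable.of_norm_bounded ((part1 ((s:ℝ):ℂ)).mul_left (‖B‖ * ‖((s:ℝ):ℂ)‖))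
        (fun n => ?_)
      rw [norm_smul, norm_pow]
      calc ‖((s:ℝ):ℂ)‖^(n+1) * ‖B (ψ n)‖ ≤ ‖((s:ℝ):ℂ)‖^(n+1) * (‖B‖ * ‖ψ n‖) := by
            gcongr; exact B.le_opNorm _
        _ = ‖B‖ * ‖((s:ℝ):ℂ)‖ * (‖ψ n‖ * ‖((s:ℝ):ℂ)‖^n) := by rw [pow_succ]; ring
    have hIte : Summable (fun n : ℕ => if n = 0 then (0:H) else ((s:ℝ):ℂ)^n • B (ψ (n-1))) := by
      refine (summable_nat_add_iff 1).1 (hB'.congr fun n => ?_)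
      simp
    have e0 : ∀ n : ℕ, (((n+1:ℕ)):ℂ) • ψ (n+1) = A (ψ n) + (if n = 0 then 0 else B (ψ (n-1))) := by
      intro n
      match n with
      | 0 => simp [hψ1]
      | (m+1) =>
        rw [if_neg (Nat.succ_ne_zero m)]
        have h2 : ((m+1+1:ℕ):ℂ) ≠ 0 := Nat.cast_ne_zero.mpr (by omega)
        rw [hψrec (m+1+1) (by omega), smul_inv_smul₀ h2,
          show m+1+1-1 = m+1 from rfl, show m+1+1-2 = m from rfl, show m+1-1 = m from rfl]
    have e1 : ∀ n : ℕ, ((((n+1:ℕ)):ℂ) * ((s:ℝ):ℂ)^(n+1-1)) • ψ (n+1)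
        = ((s:ℝ):ℂ)^n • A (ψ n) + (if n = 0 then 0 else ((s:ℝ):ℂ)^n • B (ψ (n-1))) := by
      intro n
      rw [show n+1-1 = n from rfl, mul_comm, mul_smul, e0 n, smul_add]
      congr 1
      by_cases h : n = 0 <;> simp [h]
    have hEq : (∑' n : ℕ, (((n:ℕ):ℂ) * ((s:ℝ):ℂ)^(n-1)) • ψ n)
        = (A + ((s:ℝ):ℂ) • B) (∑' n : ℕ, ((s:ℝ):ℂ)^n • ψ n) := by
      rw [Summable.tsum_eq_zero_add hsum']
      simp only [Nat.cast_zero, zero_mul, zero_smul, zero_add]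
      rw [tsum_congr e1, Summable.tsum_add hA hIte]
      have hApart : (∑' n : ℕ, ((s:ℝ):ℂ)^n • A (ψ n)) = A (∑' n : ℕ, ((s:ℝ):ℂ)^n • ψ n) := by
        rw [A.map_tsum hT]
        exact tsum_congr fun n => (A.map_smul _ _).symm
      have hBpart : (∑' n : ℕ, (if n = 0 then (0:H) else ((s:ℝ):ℂ)^n • B (ψ (n-1))))
          = ((s:ℝ):ℂ) • B (∑' n : ℕ, ((s:ℝ):ℂ)^n • ψ n) := by
        rw [Summable.tsum_eq_zero_add hIte]
        simp only [reduceIte, zero_add]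
        have h3 : ∀ n : ℕ, (if n+1 = 0 then (0:H) else ((s:ℝ):ℂ)^(n+1) • B (ψ (n+1-1)))
            = ((s:ℝ):ℂ) • (((s:ℝ):ℂ)^n • B (ψ n)) := by
          intro n
          rw [if_neg (Nat.succ_ne_zero n), show n+1-1 = n from rfl, pow_succ, mul_comm, mul_smul]
        rw [tsum_congr h3, Summable.tsum_const_smul ((s:ℝ):ℂ) hB]
        congr 1
        rw [B.map_tsum hT]
        exact tsum_congr fun n => (B.map_smul _ _).symm
      rw [hApart, hBpart]
      simp [ContinuousLinearMap.add_apply, ContinuousLinearMap.smul_apply]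
    rw [hEq] at hDer
    exact hDer
end

section
/- Let a, b be positive real numbers and define p_n by p₀ = 1, p₁ = a, p_{n+1} = a p_n + n b p_{n-1} for n ≥ 1. Then for every n ≥ 0, p_n = Σ_{k=0}^{⌊n/2⌋} (2k−1)!! · C(n, 2k) · a^{n−2k} b^{k}, where (2k−1)!! is the odd double factorial and C(n,2k) the binomial coefficient. -/
open Finset

private lemma dfact_odd_succ (j : ℕ) :
    (2 * j + 1).doubleFactorial = (2 * j + 1) * (2 * j - 1).doubleFactorial := by
  cases j with
  | zero => simp [Nat.doubleFactorial]
  | succ i =>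
      have h1 : 2 * (i + 1) + 1 = (2 * i + 1) + 2 := by ring
      have h2 : 2 * (i + 1) - 1 = 2 * i + 1 := by omega
      rw [h1, h2, Nat.doubleFactorial]

private lemma key (n j : ℕ) :
    (2 * j + 1).doubleFactorial * (n + 2).choose (2 * j + 2)
      = (2 * j + 1).doubleFactorial * (n + 1).choose (2 * j + 2)
        + (n + 1) * ((2 * j - 1).doubleFactorial * n.choose (2 * j)) := by
  have hp : (n + 2).choose (2 * j + 2)
      = (n + 1).choose (2 * j + 1) + (n + 1).choose (2 * j + 2) :=
    Nat.choose_succ_succ (n + 1) (2 * j + 1)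
  have hs : (n + 1) * n.choose (2 * j) = (n + 1).choose (2 * j + 1) * (2 * j + 1) :=
    Nat.add_one_mul_choose_eq n (2 * j)
  rw [hp, Nat.mul_add, dfact_odd_succ]
  ring_nf
  ring_nf at hs
  nlinarith [hs]

private lemma term_step (a b : ℝ) (n j : ℕ) :
    ((2 * (j + 1) - 1).doubleFactorial : ℝ) * ((n + 2).choose (2 * (j + 1)) : ℝ)
        * a ^ ((n + 2) - 2 * (j + 1)) * b ^ (j + 1)
      = a * (((2 * (j + 1) - 1).doubleFactorial : ℝ) * ((n + 1).choose (2 * (j + 1)) : ℝ)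
          * a ^ ((n + 1) - 2 * (j + 1)) * b ^ (j + 1))
        + ((n : ℝ) + 1) * b * (((2 * j - 1).doubleFactorial : ℝ) * (n.choose (2 * j) : ℝ)
          * a ^ (n - 2 * j) * b ^ j) := by
  have e0 : 2 * (j + 1) - 1 = 2 * j + 1 := by omega
  have e1 : (n + 2) - 2 * (j + 1) = n - 2 * j := by omega
  have e2 : 2 * (j + 1) = 2 * j + 2 := by ring
  rw [e0, e1, e2]
  have hk : ((2 * j + 1).doubleFactorial : ℝ) * ((n + 2).choose (2 * j + 2) : ℝ)
      = ((2 * j + 1).doubleFactorial : ℝ) * ((n + 1).choose (2 * j + 2) : ℝ)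
        + ((n : ℝ) + 1) * (((2 * j - 1).doubleFactorial : ℝ) * (n.choose (2 * j) : ℝ)) := by
    exact_mod_cast key n j
  by_cases h : 2 * j + 1 ≤ n
  · have hpow : a ^ (n - 2 * j) = a ^ (n + 1 - (2 * j + 2)) * a := by
      rw [← pow_succ]
      congr 1
      omega
    rw [hpow]
    linear_combination (a ^ (n + 1 - (2 * j + 2)) * a * b ^ (j + 1)) * hk
  · have hz : (n + 1).choose (2 * j + 2) = 0 := Nat.choose_eq_zero_of_lt (by omega)
    rw [hz] at hk ⊢
    push_cast at hk ⊢
    linear_combination (a ^ (n - 2 * j) * b ^ (j + 1)) * hk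

/-- For positive reals `a`, `b` and the sequence `p 0 = 1`, `p 1 = a`,
`p (n+1) = a p n + n b p (n-1)` for `n ≥ 1`, one has the explicit formula
`p n = ∑_{k=0}^{⌊n/2⌋} (2k-1)!! C(n,2k) a^(n-2k) b^k`. -/
theorem stmt_4 (a b : ℝ) (ha : 0 < a) (hb : 0 < b)
    (p : ℕ → ℝ)
    (hp0 : p 0 = 1) (hp1 : p 1 = a)
    (hprec : ∀ n : ℕ, 1 ≤ n → p (n + 1) = a * p n + n * b * p (n - 1)) :
    ∀ n : ℕ, p n = ∑ k ∈ Finset.range (n / 2 + 1),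
      (Nat.doubleFactorial (2 * k - 1) : ℝ) * (n.choose (2 * k) : ℝ) * a ^ (n - 2 * k) * b ^ k := by
  set T : ℕ → ℕ → ℝ := fun n k =>
    (Nat.doubleFactorial (2 * k - 1) : ℝ) * (n.choose (2 * k) : ℝ) * a ^ (n - 2 * k) * b ^ k
    with hT
  have ext : ∀ n M : ℕ, n / 2 + 1 ≤ M →
      (∑ k ∈ Finset.range M, T n k) = ∑ k ∈ Finset.range (n / 2 + 1), T n k := by
    intro n M hM
    refine (Finset.sum_subset (Finset.range_subset_range.mpr hM) ?_).symm
    intro k _ hk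
    simp only [Finset.mem_range, not_lt] at hk
    have : n.choose (2 * k) = 0 := Nat.choose_eq_zero_of_lt (by omega)
    simp [hT, this]
  have main : ∀ n : ℕ,
      p n = ∑ k ∈ Finset.range (n / 2 + 1), T n k ∧
      p (n + 1) = ∑ k ∈ Finset.range ((n + 1) / 2 + 1), T (n + 1) k := by
    intro n
    induction n with
    | zero =>
        constructor
        · simp [hT, hp0, Nat.doubleFactorial]
        · simp [hT, hp1, Nat.doubleFactorial]
    | succ n ih =>
        refine ⟨ih.2, ?_⟩
        have hrec : p (n + 2) = a * p (n + 1) + ((n : ℝ) + 1) * b * p n := by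
          have := hprec (n + 1) (by omega)
          simpa using this
        rw [hrec, ih.1, ih.2]
        set m := n / 2 with hm
        have h2 : (n + 2) / 2 + 1 = m + 2 := by omega
        have hS1 : (∑ k ∈ Finset.range ((n + 1) / 2 + 1), T (n + 1) k)
            = ∑ k ∈ Finset.range (m + 2), T (n + 1) k :=
          (ext (n + 1) (m + 2) (by omega)).symm ▸ (ext (n + 1) (m + 2) (by omega)).symm
        have hS0 : (∑ k ∈ Finset.range (n / 2 + 1), T n k)
            = ∑ k ∈ Finset.range (m + 2), T n k := (ext n (m + 2) (by omega)).symm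
        rw [h2, hS1, hS0]
        rw [Finset.mul_sum, Finset.mul_sum]
        rw [Finset.sum_range_succ' (fun k => T (n + 2) k) (m + 1),
            Finset.sum_range_succ' (fun k => a * T (n + 1) k) (m + 1),
            Finset.sum_range_succ (fun k => ((n : ℝ) + 1) * b * T n k) (m + 1)]
        have hzero : T n (m + 1) = 0 := by
          have : n.choose (2 * (m + 1)) = 0 := Nat.choose_eq_zero_of_lt (by omega)
          simp [hT, this]
        rw [hzero]
        have h00 : T (n + 2) 0 = a * T (n + 1) 0 := by
          simp [hT, pow_succ]
          ring
        rw [h00, mul_zero, add_zero]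
        have hsum : (∑ k ∈ Finset.range (m + 1), T (n + 2) (k + 1))
            = ∑ k ∈ Finset.range (m + 1),
                (a * T (n + 1) (k + 1) + ((n : ℝ) + 1) * b * T n k) :=
          Finset.sum_congr rfl fun j _ => term_step a b n j
        rw [hsum, Finset.sum_add_distrib]
        ring
  intro n
  exact (main n).1
end

section
/- Let a, b be positive real numbers and define p_n by p₀ = 1, p₁ = a, p_{n+1} = a p_n + n b p_{n-1} for n ≥ 1. Then for every n ≥ 0, p_n / n! = Σ_{k=0}^{⌊n/2⌋} a^{n−2k} b^{k} / (k! · (n−2k)! · 2^{k}). -/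
open Finset


lemma fact_ne (n : ℕ) : ((n.factorial : ℝ)) ≠ 0 := by
  exact_mod_cast n.factorial_ne_zero

lemma term_id (a b : ℝ) (s i : ℕ) :
    ((s : ℝ) + 2*i + 3) *
      (a^(s+1)*b^(i+1) / (((i+1).factorial : ℝ) * ((s+1).factorial : ℝ) * 2^(i+1)))
    = a * (a^s*b^(i+1) / (((i+1).factorial : ℝ) * ((s).factorial : ℝ) * 2^(i+1)))
      + b * (a^(s+1)*b^i / (((i).factorial : ℝ) * ((s+1).factorial : ℝ) * 2^i)) := by
  have h1 : ((s+1).factorial : ℝ) = ((s:ℝ)+1) * s.factorial := by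
    rw [Nat.factorial_succ]; push_cast; ring
  have h2 : ((i+1).factorial : ℝ) = ((i:ℝ)+1) * i.factorial := by
    rw [Nat.factorial_succ]; push_cast; ring
  rw [h1, h2]
  have hs := fact_ne s; have hi := fact_ne i
  have hs1 : (s:ℝ)+1 ≠ 0 := by positivity
  have hi1 : (i:ℝ)+1 ≠ 0 := by positivity
  field_simp
  ring

noncomputable def Ssum (a b : ℝ) (n : ℕ) : ℝ :=
  ∑ k ∈ Finset.range (n/2+1),
    a ^ (n - 2*k) * b ^ k / ((k.factorial : ℝ) * ((n - 2*k).factorial : ℝ) * 2 ^ k)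

lemma keyE (a b : ℝ) (m : ℕ) :
    (2*(m:ℝ)+3) * Ssum a b (2*m+3) = a * Ssum a b (2*m+2) + b * Ssum a b (2*m+1) := by
  have r1 : (2*m+3)/2 + 1 = m+2 := by omega
  have r2 : (2*m+2)/2 + 1 = m+2 := by omega
  have r3 : (2*m+1)/2 + 1 = m+1 := by omega
  unfold Ssum
  rw [r1, r2, r3, Finset.mul_sum, Finset.mul_sum, Finset.mul_sum]
  rw [Finset.sum_range_succ' (fun k => (2*(m:ℝ)+3) *
        (a ^ (2*m+3 - 2*k) * b ^ k / ((k.factorial : ℝ) * ((2*m+3 - 2*k).factorial : ℝ) * 2 ^ k))) (m+1)]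
  rw [Finset.sum_range_succ' (fun k => a *
        (a ^ (2*m+2 - 2*k) * b ^ k / ((k.factorial : ℝ) * ((2*m+2 - 2*k).factorial : ℝ) * 2 ^ k))) (m+1)]
  have h0 : (2*(m:ℝ)+3) *
      (a ^ (2*m+3 - 2*0) * b ^ 0 / (((0:ℕ).factorial : ℝ) * ((2*m+3 - 2*0).factorial : ℝ) * 2 ^ 0))
      = a * (a ^ (2*m+2 - 2*0) * b ^ 0 / (((0:ℕ).factorial : ℝ) * ((2*m+2 - 2*0).factorial : ℝ) * 2 ^ 0)) := by
    have e1 : 2*m+3 - 2*0 = (2*m+2)+1 := by omega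
    have e2 : 2*m+2 - 2*0 = 2*m+2 := by omega
    rw [e1, e2, Nat.factorial_succ, pow_succ]
    have := fact_ne (2*m+2)
    push_cast
    field_simp
    ring
  have hterm : ∀ i ∈ Finset.range (m+1),
      (2*(m:ℝ)+3) * (a ^ (2*m+3 - 2*(i+1)) * b ^ (i+1) /
          (((i+1).factorial : ℝ) * ((2*m+3 - 2*(i+1)).factorial : ℝ) * 2 ^ (i+1)))
      = a * (a ^ (2*m+2 - 2*(i+1)) * b ^ (i+1) /
          (((i+1).factorial : ℝ) * ((2*m+2 - 2*(i+1)).factorial : ℝ) * 2 ^ (i+1)))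
        + b * (a ^ (2*m+1 - 2*i) * b ^ i /
          ((i.factorial : ℝ) * ((2*m+1 - 2*i).factorial : ℝ) * 2 ^ i)) := by
    intro i hi
    have him : i ≤ m := by simpa [Nat.lt_succ_iff] using hi
    obtain ⟨s, hs⟩ : ∃ s, 2*m = s + 2*i := ⟨2*(m-i), by omega⟩
    have e1 : 2*m+3 - 2*(i+1) = s+1 := by omega
    have e2 : 2*m+2 - 2*(i+1) = s := by omega
    have e3 : 2*m+1 - 2*i = s+1 := by omega
    rw [e1, e2, e3]
    have hc : 2*(m:ℝ)+3 = (s:ℝ)+2*i+3 := by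
      have := congrArg (Nat.cast : ℕ → ℝ) hs
      push_cast at this; linarith
    rw [hc]
    exact term_id a b s i
  rw [Finset.sum_congr rfl hterm, Finset.sum_add_distrib, h0]
  ring

lemma keyO (a b : ℝ) (m : ℕ) :
    (2*(m:ℝ)+2) * Ssum a b (2*m+2) = a * Ssum a b (2*m+1) + b * Ssum a b (2*m) := by
  have r1 : (2*m+2)/2 + 1 = m+2 := by omega
  have r2 : (2*m+1)/2 + 1 = m+1 := by omega
  have r3 : (2*m)/2 + 1 = m+1 := by omega
  unfold Ssum
  rw [r1, r2, r3, Finset.mul_sum, Finset.mul_sum, Finset.mul_sum]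
  rw [Finset.sum_range_succ' (fun k => (2*(m:ℝ)+2) *
        (a ^ (2*m+2 - 2*k) * b ^ k / ((k.factorial : ℝ) * ((2*m+2 - 2*k).factorial : ℝ) * 2 ^ k))) (m+1)]
  rw [Finset.sum_range_succ' (fun k => a *
        (a ^ (2*m+1 - 2*k) * b ^ k / ((k.factorial : ℝ) * ((2*m+1 - 2*k).factorial : ℝ) * 2 ^ k))) m]
  rw [Finset.sum_range_succ (fun i => (2*(m:ℝ)+2) *
        (a ^ (2*m+2 - 2*(i+1)) * b ^ (i+1) /
          (((i+1).factorial : ℝ) * ((2*m+2 - 2*(i+1)).factorial : ℝ) * 2 ^ (i+1)))) m]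
  rw [Finset.sum_range_succ (fun k => b *
        (a ^ (2*m - 2*k) * b ^ k / ((k.factorial : ℝ) * ((2*m - 2*k).factorial : ℝ) * 2 ^ k))) m]
  have h0 : (2*(m:ℝ)+2) *
      (a ^ (2*m+2 - 2*0) * b ^ 0 / (((0:ℕ).factorial : ℝ) * ((2*m+2 - 2*0).factorial : ℝ) * 2 ^ 0))
      = a * (a ^ (2*m+1 - 2*0) * b ^ 0 / (((0:ℕ).factorial : ℝ) * ((2*m+1 - 2*0).factorial : ℝ) * 2 ^ 0)) := by
    have e1 : 2*m+2 - 2*0 = (2*m+1)+1 := by omega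
    have e2 : 2*m+1 - 2*0 = 2*m+1 := by omega
    rw [e1, e2, Nat.factorial_succ, pow_succ]
    have := fact_ne (2*m+1)
    push_cast
    field_simp
    ring
  have htop : (2*(m:ℝ)+2) *
      (a ^ (2*m+2 - 2*(m+1)) * b ^ (m+1) /
        (((m+1).factorial : ℝ) * ((2*m+2 - 2*(m+1)).factorial : ℝ) * 2 ^ (m+1)))
      = b * (a ^ (2*m - 2*m) * b ^ m /
        ((m.factorial : ℝ) * ((2*m - 2*m).factorial : ℝ) * 2 ^ m)) := by
    have e1 : 2*m+2 - 2*(m+1) = 0 := by omega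
    have e2 : 2*m - 2*m = 0 := by omega
    rw [e1, e2, Nat.factorial_succ, pow_succ, pow_succ]
    have := fact_ne m
    simp only [Nat.factorial_zero, pow_zero]
    push_cast
    field_simp
  have hterm : ∀ i ∈ Finset.range m,
      (2*(m:ℝ)+2) * (a ^ (2*m+2 - 2*(i+1)) * b ^ (i+1) /
          (((i+1).factorial : ℝ) * ((2*m+2 - 2*(i+1)).factorial : ℝ) * 2 ^ (i+1)))
      = a * (a ^ (2*m+1 - 2*(i+1)) * b ^ (i+1) /
          (((i+1).factorial : ℝ) * ((2*m+1 - 2*(i+1)).factorial : ℝ) * 2 ^ (i+1)))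
        + b * (a ^ (2*m - 2*i) * b ^ i /
          ((i.factorial : ℝ) * ((2*m - 2*i).factorial : ℝ) * 2 ^ i)) := by
    intro i hi
    have him : i < m := by simpa using hi
    obtain ⟨s, hs⟩ : ∃ s, 2*m = s + 2*i + 1 := ⟨2*(m-i)-1, by omega⟩
    have e1 : 2*m+2 - 2*(i+1) = s+1 := by omega
    have e2 : 2*m+1 - 2*(i+1) = s := by omega
    have e3 : 2*m - 2*i = s+1 := by omega
    rw [e1, e2, e3]
    have hc : 2*(m:ℝ)+2 = (s:ℝ)+2*i+3 := by
      have := congrArg (Nat.cast : ℕ → ℝ) hs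
      push_cast at this; linarith
    rw [hc]
    exact term_id a b s i
  rw [Finset.sum_congr rfl hterm, Finset.sum_add_distrib, h0, htop]
  ring

lemma key_s5 (a b : ℝ) (n : ℕ) :
    ((n:ℝ)+2) * Ssum a b (n+2) = a * Ssum a b (n+1) + b * Ssum a b n := by
  rcases Nat.even_or_odd n with ⟨m, hm⟩ | ⟨m, hm⟩
  · subst hm
    have := keyO a b m
    have hc : ((2*m:ℕ):ℝ) + 2 = 2*(m:ℝ)+2 := by push_cast; ring
    rw [show m+m = 2*m from by omega, hc]
    exact this
  · subst hm
    have := keyE a b m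
    have hc : ((2*m+1:ℕ):ℝ) + 2 = 2*(m:ℝ)+3 := by push_cast; ring
    rw [hc]
    exact this

/-- For positive reals `a`, `b` and the sequence `p 0 = 1`, `p 1 = a`,
`p (n+1) = a p n + n b p (n-1)` for `n ≥ 1`, one has
`p n / n! = ∑_{k=0}^{⌊n/2⌋} a^(n-2k) b^k / (k! (n-2k)! 2^k)`. -/
theorem stmt_5 (a b : ℝ) (ha : 0 < a) (hb : 0 < b)
    (p : ℕ → ℝ)
    (hp0 : p 0 = 1) (hp1 : p 1 = a)
    (hprec : ∀ n : ℕ, 1 ≤ n → p (n + 1) = a * p n + n * b * p (n - 1)) :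
    ∀ n : ℕ, p n / n.factorial = ∑ k ∈ Finset.range (n / 2 + 1),
      a ^ (n - 2 * k) * b ^ k /
        ((k.factorial : ℝ) * ((n - 2 * k).factorial : ℝ) * 2 ^ k) := by
  have hmain : ∀ n : ℕ, p n = n.factorial * Ssum a b n ∧
      p (n+1) = (n+1).factorial * Ssum a b (n+1) := by
    intro n
    induction n with
    | zero =>
      constructor
      · simp [hp0, Ssum]
      · simp [hp1, Ssum]
    | succ n ih =>
      refine ⟨ih.2, ?_⟩
      have hrec := hprec (n+1) (by omega)
      simp only [Nat.add_sub_cancel] at hrec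
      have hk := key_s5 a b n
      rw [hrec, ih.1, ih.2]
      have hf1 : ((n+2).factorial : ℝ) = ((n:ℝ)+2) * ((n+1).factorial) := by
        rw [Nat.factorial_succ]; push_cast; ring
      have hf2 : ((n+1).factorial : ℝ) = ((n:ℝ)+1) * (n.factorial) := by
        rw [Nat.factorial_succ]; push_cast; ring
      rw [hf1, hf2]
      push_cast
      nlinarith [hk, fact_ne n]
  intro n
  rw [(hmain n).1]
  rw [show (Ssum a b n) = ∑ k ∈ Finset.range (n / 2 + 1),
      a ^ (n - 2 * k) * b ^ k /
        ((k.factorial : ℝ) * ((n - 2 * k).factorial : ℝ) * 2 ^ k) from rfl]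
  rw [mul_comm, mul_div_assoc, div_self (fact_ne n), mul_one]
end

section
/- Let a, b be positive real numbers and define p_n by p₀ = 1, p₁ = a, p_{n+1} = a p_n + n b p_{n-1} for n ≥ 1. Then for every n ≥ 0, p_n / n! ≤ (1/⌊n/3⌋!) · aⁿ · (1 + b/(2a²))^{n/2}. -/
set_option maxHeartbeats 2000000 in
/-- For positive reals `a`, `b` and the sequence `p 0 = 1`, `p 1 = a`,
`p (n+1) = a p n + n b p (n-1)` for `n ≥ 1`, one has for every `n`
`p n / n! ≤ (1/⌊n/3⌋!) aⁿ (1 + b/(2a²))^(n/2)`. -/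
theorem stmt_7 (a b : ℝ) (ha : 0 < a) (hb : 0 < b)
    (p : ℕ → ℝ)
    (hp0 : p 0 = 1) (hp1 : p 1 = a)
    (hprec : ∀ n : ℕ, 1 ≤ n → p (n + 1) = a * p n + n * b * p (n - 1)) :
    ∀ n : ℕ, p n / n.factorial ≤
      (1 / ((n / 3).factorial : ℝ)) * a ^ n * (1 + b / (2 * a ^ 2)) ^ ((n : ℝ) / 2) := by
  have ha2 : (0:ℝ) < 2 * a ^ 2 := by positivity
  set c : ℝ := 1 + b / (2 * a ^ 2) with hc
  have hc1 : 1 ≤ c := by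
    have : 0 ≤ b / (2 * a ^ 2) := by positivity
    simp [hc]; linarith
  have hc0 : (0:ℝ) ≤ c := by linarith
  set s : ℝ := Real.sqrt c with hs
  have hs1 : 1 ≤ s := by
    rw [hs, show (1:ℝ) = Real.sqrt 1 by simp]
    exact Real.sqrt_le_sqrt hc1
  have hs2 : s ^ 2 = c := Real.sq_sqrt hc0
  have hbs : b = 2 * a ^ 2 * (s ^ 2 - 1) := by
    rw [hs2, hc]; field_simp; ring
  set B : ℕ → ℝ := fun n => (n.factorial : ℝ) / ((n / 3).factorial : ℝ) * a ^ n * s ^ n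
    with hB
  have hss : s ≤ s ^ 2 := by nlinarith
  have step : ∀ n, 2 ≤ n → a * B n + n * b * B (n - 1) ≤ B (n + 1) := by
    intro n hn
    obtain ⟨m, rfl | rfl | rfl⟩ : ∃ m, n = 3*m+2 ∨ n = 3*m+3 ∨ n = 3*m+4 := by
      refine ⟨(n-2)/3, by omega⟩
    · -- n = 3m+2
      rw [show 3*m+2-1 = 3*m+1 from by omega, show 3*m+2+1 = 3*m+3 from by omega, hB]
      simp only
      rw [show (3*m+1)/3 = m from by omega, show (3*m+2)/3 = m from by omega,
          show (3*m+3)/3 = m+1 from by omega]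
      have f2 : ((3*m+2).factorial : ℝ) = (3*(m:ℝ)+2) * ((3*m+1).factorial : ℝ) := by
        rw [show 3*m+2 = 3*m+1+1 from by omega, Nat.factorial_succ]; push_cast; ring
      have f3 : ((3*m+3).factorial : ℝ)
          = (3*(m:ℝ)+3) * (3*(m:ℝ)+2) * ((3*m+1).factorial : ℝ) := by
        rw [show 3*m+3 = 3*m+1+1+1 from by omega, Nat.factorial_succ, Nat.factorial_succ]
        push_cast; ring
      have fm : ((m+1).factorial : ℝ) = ((m:ℝ)+1) * (m.factorial : ℝ) := by
        rw [Nat.factorial_succ]; push_cast; ring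
      have hm0 : (0:ℝ) < (m.factorial : ℝ) := by
        exact_mod_cast Nat.factorial_pos m
      have hF0 : (0:ℝ) < ((3*m+1).factorial : ℝ) := by
        exact_mod_cast Nat.factorial_pos _
      have hred : s + 2*(s^2-1) ≤ 3*s^2 := by nlinarith
      have hC : (0:ℝ) ≤ a^2 * a^(3*m+1) * s^(3*m+1) * ((3*m+1).factorial:ℝ)
          * (3*(m:ℝ)+2) / (m.factorial:ℝ) := by positivity
      have h := mul_le_mul_of_nonneg_left hred hC
      refine le_trans (le_of_eq ?_) (le_trans h (le_of_eq ?_))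
      · rw [f2, hbs]; push_cast; field_simp; ring
      · rw [f3, fm]; push_cast; field_simp; ring
    · -- n = 3m+3
      rw [show 3*m+3-1 = 3*m+2 from by omega, show 3*m+3+1 = 3*m+4 from by omega, hB]
      simp only
      rw [show (3*m+2)/3 = m from by omega, show (3*m+3)/3 = m+1 from by omega,
          show (3*m+4)/3 = m+1 from by omega]
      have f3 : ((3*m+3).factorial : ℝ) = (3*(m:ℝ)+3) * ((3*m+2).factorial : ℝ) := by
        rw [show 3*m+3 = 3*m+2+1 from by omega, Nat.factorial_succ]; push_cast; ring
      have f4 : ((3*m+4).factorial : ℝ)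
          = (3*(m:ℝ)+4) * (3*(m:ℝ)+3) * ((3*m+2).factorial : ℝ) := by
        rw [show 3*m+4 = 3*m+2+1+1 from by omega, Nat.factorial_succ, Nat.factorial_succ]
        push_cast; ring
      have fm : ((m+1).factorial : ℝ) = ((m:ℝ)+1) * (m.factorial : ℝ) := by
        rw [Nat.factorial_succ]; push_cast; ring
      have hm0 : (0:ℝ) < (m.factorial : ℝ) := by
        exact_mod_cast Nat.factorial_pos m
      have hF0 : (0:ℝ) < ((3*m+2).factorial : ℝ) := by
        exact_mod_cast Nat.factorial_pos _
      have hmn : (0:ℝ) ≤ (m:ℝ) := Nat.cast_nonneg m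
      have hred : s + 2*((m:ℝ)+1)*(s^2-1) ≤ (3*(m:ℝ)+4)*s^2 := by
        nlinarith [mul_nonneg hmn (sq_nonneg s)]
      have hC : (0:ℝ) ≤ a^2 * a^(3*m+2) * s^(3*m+2) * ((3*m+2).factorial:ℝ)
          * (3*(m:ℝ)+3) / (((m:ℝ)+1) * (m.factorial:ℝ)) := by positivity
      have h := mul_le_mul_of_nonneg_left hred hC
      refine le_trans (le_of_eq ?_) (le_trans h (le_of_eq ?_))
      · rw [f3, fm, hbs]; push_cast; field_simp; ring
      · rw [f4, fm]; push_cast; field_simp; ring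
    · -- n = 3m+4
      rw [show 3*m+4-1 = 3*m+3 from by omega, show 3*m+4+1 = 3*m+5 from by omega, hB]
      simp only
      rw [show (3*m+3)/3 = m+1 from by omega, show (3*m+4)/3 = m+1 from by omega,
          show (3*m+5)/3 = m+1 from by omega]
      have f4 : ((3*m+4).factorial : ℝ) = (3*(m:ℝ)+4) * ((3*m+3).factorial : ℝ) := by
        rw [show 3*m+4 = 3*m+3+1 from by omega, Nat.factorial_succ]; push_cast; ring
      have f5 : ((3*m+5).factorial : ℝ)
          = (3*(m:ℝ)+5) * (3*(m:ℝ)+4) * ((3*m+3).factorial : ℝ) := by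
        rw [show 3*m+5 = 3*m+3+1+1 from by omega, Nat.factorial_succ, Nat.factorial_succ]
        push_cast; ring
      have hm0 : (0:ℝ) < ((m+1).factorial : ℝ) := by
        exact_mod_cast Nat.factorial_pos _
      have hF0 : (0:ℝ) < ((3*m+3).factorial : ℝ) := by
        exact_mod_cast Nat.factorial_pos _
      have hmn : (0:ℝ) ≤ (m:ℝ) := Nat.cast_nonneg m
      have hred : s + 2*(s^2-1) ≤ (3*(m:ℝ)+5)*s^2 := by
        nlinarith [mul_nonneg hmn (sq_nonneg s)]
      have hC : (0:ℝ) ≤ a^2 * a^(3*m+3) * s^(3*m+3) * ((3*m+3).factorial:ℝ)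
          * (3*(m:ℝ)+4) / (((m+1).factorial:ℝ)) := by positivity
      have h := mul_le_mul_of_nonneg_left hred hC
      refine le_trans (le_of_eq ?_) (le_trans h (le_of_eq ?_))
      · rw [f4, hbs]; push_cast; field_simp; ring
      · rw [f5]; push_cast; field_simp; ring
  have main : ∀ n, p n ≤ B n ∧ p (n+1) ≤ B (n+1) := by
    intro n
    induction n with
    | zero =>
      constructor
      · rw [hp0, hB]; simp
      · rw [hp1, hB]; simp only
        rw [show 1/3 = 0 from by omega]
        simp [Nat.factorial]
        nlinarith
    | succ k ih =>
      refine ⟨ih.2, ?_⟩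
      rcases Nat.eq_zero_or_pos k with rfl | hk
      · -- p 2 ≤ B 2
        have h2 := hprec 1 le_rfl
        rw [show (1:ℕ)+1 = 2 from rfl] at h2
        rw [h2, hp1, hp0, hB]
        simp only
        rw [show 2/3 = 0 from by omega]
        simp [Nat.factorial]
        nlinarith
      · have hrec := hprec (k+1) (by omega)
        rw [show k+1-1 = k from by omega] at hrec
        rw [hrec]
        calc a * p (k+1) + (↑(k+1)) * b * p k
            ≤ a * B (k+1) + (↑(k+1)) * b * B k := by
              have h1 : a * p (k+1) ≤ a * B (k+1) :=
                mul_le_mul_of_nonneg_left ih.2 ha.le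
              have h2 : (↑(k+1):ℝ) * b * p k ≤ (↑(k+1):ℝ) * b * B k :=
                mul_le_mul_of_nonneg_left ih.1 (by positivity)
              linarith
          _ ≤ B (k+1+1) := by
              have := step (k+1) (by omega)
              rw [show k+1-1 = k from by omega] at this
              exact this
  intro n
  have hkey : p n ≤ B n := (main n).1
  have hd0 : (0:ℝ) < ((n/3).factorial : ℝ) := by exact_mod_cast Nat.factorial_pos _
  have hn0 : (0:ℝ) < (n.factorial : ℝ) := by exact_mod_cast Nat.factorial_pos _
  have hsn : c ^ ((n:ℝ)/2) = s ^ n := by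
    rw [show ((n:ℝ)/2) = (1/2 : ℝ) * (n:ℝ) by ring, Real.rpow_mul hc0,
      Real.rpow_natCast, hs, Real.sqrt_eq_rpow]
  rw [hsn]
  rw [div_le_iff₀ hn0]
  calc p n ≤ B n := hkey
    _ = 1 / ((n/3).factorial : ℝ) * a ^ n * s ^ n * (n.factorial : ℝ) := by
        rw [hB]; simp only; ring
end

section
/- Let A and B be nonzero continuous linear operators on a complex Hilbert space, let ψ₀ be a vector, and define (ψ_n) by ψ₁ = A ψ₀ and ψ_n = (1/n)(A ψ_{n-1} + B ψ_{n-2}) for n ≥ 2. Then ‖ψ_n‖^{1/n} → 0 as n → ∞; in particular the radius of convergence R_c = (limsup_{n→∞} ‖ψ_n‖^{1/n})^{-1} of the series Σ ψ_n sⁿ is infinite. -/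
open Filter

/-- Let `A`, `B` be nonzero continuous linear operators on a complex
Hilbert space and `ψ` the sequence from the recurrence `ψ 1 = A (ψ 0)`,
`ψ n = (1/n)(A ψ_{n-1} + B ψ_{n-2})` for `n ≥ 2`.  Then `‖ψ n‖^(1/n) → 0`, and in
particular the radius of convergence `R_c = (limsup ‖ψ n‖^(1/n))⁻¹` of `∑ ψ n sⁿ`
is infinite. -/
theorem stmt_8 {H : Type*} [NormedAddCommGroup H] [InnerProductSpace ℂ H]
    (A B : H →L[ℂ] H) (hA : 0 < ‖A‖) (hB : 0 < ‖B‖) (ψ : ℕ → H)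
    (hψ1 : ψ 1 = A (ψ 0))
    (hψrec : ∀ n : ℕ, 2 ≤ n → ψ n = ((n : ℂ))⁻¹ • (A (ψ (n - 1)) + B (ψ (n - 2)))) :
    Tendsto (fun n : ℕ => ‖ψ n‖ ^ ((n : ℝ))⁻¹) atTop (nhds 0) ∧
    (Filter.atTop.limsup fun n : ℕ => ENNReal.ofReal (‖ψ n‖ ^ ((n : ℝ))⁻¹))⁻¹ = ⊤ := by
  set M : ℝ := max ‖A‖ ‖B‖ with hMdef
  have hM : (0:ℝ) < M := lt_max_of_lt_left hA
  -- key growth bound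
  have key : ∀ δ : ℝ, 0 < δ → ∃ N : ℕ, ∃ K : ℝ, 1 ≤ K ∧ ∀ n, N ≤ n → ‖ψ n‖ ≤ K * δ ^ n := by
    intro δ hδ
    obtain ⟨N₀, hN₀⟩ := exists_nat_ge (M * (δ + 1) / δ ^ 2)
    set N := N₀ + 2 with hN
    set K := max 1 (max (‖ψ N‖ / δ ^ N) (‖ψ (N+1)‖ / δ ^ (N+1))) with hKdef
    have hK1 : (1:ℝ) ≤ K := le_max_left _ _
    have hK0 : (0:ℝ) ≤ K := by linarith
    refine ⟨N, K, hK1, ?_⟩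
    intro n
    induction n using Nat.strong_induction_on with
    | _ n ih =>
      intro hn
      have hcase : n = N ∨ n = N + 1 ∨ N + 2 ≤ n := by omega
      rcases hcase with rfl | h1 | h2
      · have : ‖ψ N‖ / δ ^ N ≤ K := (le_max_left _ _).trans (le_max_right _ _)
        calc ‖ψ N‖ = ‖ψ N‖ / δ ^ N * δ ^ N := by
              field_simp
          _ ≤ K * δ ^ N := by
              exact mul_le_mul_of_nonneg_right this (le_of_lt (pow_pos hδ N))
      · subst h1
        have : ‖ψ (N+1)‖ / δ ^ (N+1) ≤ K := (le_max_right _ _).trans (le_max_right _ _)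
        calc ‖ψ (N+1)‖ = ‖ψ (N+1)‖ / δ ^ (N+1) * δ ^ (N+1) := by
              field_simp
          _ ≤ K * δ ^ (N+1) := by
              exact mul_le_mul_of_nonneg_right this (le_of_lt (pow_pos hδ (N+1)))
      · -- inductive step
        have hn2 : 2 ≤ n := by omega
        have hnpos : (0:ℝ) < (n:ℝ) := by exact_mod_cast (by omega : 0 < n)
        have ha := ih (n-1) (by omega) (by omega)
        have hb := ih (n-2) (by omega) (by omega)
        have hAle : ‖A (ψ (n-1))‖ ≤ M * ‖ψ (n-1)‖ :=
          (A.le_opNorm _).trans (mul_le_mul_of_nonneg_right (le_max_left _ _) (norm_nonneg _))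
        have hBle : ‖B (ψ (n-2))‖ ≤ M * ‖ψ (n-2)‖ :=
          (B.le_opNorm _).trans (mul_le_mul_of_nonneg_right (le_max_right _ _) (norm_nonneg _))
        have e1 : δ ^ (n-1) = δ ^ (n-2) * δ := by
          rw [← pow_succ]
          congr 1
          omega
        have e2 : δ ^ n = δ ^ (n-2) * δ ^ 2 := by
          rw [← pow_add]
          congr 1
          omega
        have hnbig : M * (δ + 1) ≤ (n:ℝ) * δ ^ 2 := by
          have h1 : M * (δ + 1) / δ ^ 2 ≤ (N₀ : ℝ) := hN₀
          have h2 : (N₀ : ℝ) ≤ (n : ℝ) := by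
            exact_mod_cast Nat.le_of_lt_succ (by omega)
          have hδ2 : (0:ℝ) < δ ^ 2 := pow_pos hδ 2
          calc M * (δ + 1) = M * (δ + 1) / δ ^ 2 * δ ^ 2 := by field_simp
            _ ≤ (n:ℝ) * δ ^ 2 := mul_le_mul_of_nonneg_right (h1.trans h2) hδ2.le
        have he0 : (0:ℝ) ≤ δ ^ (n-2) := (pow_pos hδ _).le
        calc ‖ψ n‖ = (n:ℝ)⁻¹ * ‖A (ψ (n-1)) + B (ψ (n-2))‖ := by
              rw [hψrec n hn2, norm_smul, norm_inv, Complex.norm_natCast]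
          _ ≤ (n:ℝ)⁻¹ * (M * ‖ψ (n-1)‖ + M * ‖ψ (n-2)‖) := by
              apply mul_le_mul_of_nonneg_left _ (inv_nonneg.2 hnpos.le)
              exact (norm_add_le _ _).trans (add_le_add hAle hBle)
          _ ≤ (n:ℝ)⁻¹ * (M * (K * δ ^ (n-1)) + M * (K * δ ^ (n-2))) := by
              gcongr
          _ ≤ K * δ ^ n := by
              rw [inv_mul_le_iff₀ hnpos, e1, e2]
              nlinarith [mul_le_mul_of_nonneg_right hnbig (mul_nonneg hK0 he0)]

  -- part 1: tendsto
  have htend : Tendsto (fun n : ℕ => ‖ψ n‖ ^ ((n : ℝ))⁻¹) atTop (nhds 0) := by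
    rw [Metric.tendsto_atTop]
    intro ε hε
    have hδ : (0:ℝ) < ε / 3 := by linarith
    obtain ⟨N, K, hK1, hKey⟩ := key (ε / 3) hδ
    have hKpos : (0:ℝ) < K := by linarith
    -- K ^ (1/n) → 1
    have hroot : Tendsto (fun n : ℕ => K ^ ((n : ℝ))⁻¹) atTop (nhds 1) := by
      have h1 : Tendsto (fun n : ℕ => Real.log K * ((n : ℝ))⁻¹) atTop (nhds 0) := by
        have := tendsto_inv_atTop_nhds_zero_nat.const_mul (Real.log K)
        simpa using this
      have h2 : Tendsto (fun n : ℕ => Real.exp (Real.log K * ((n : ℝ))⁻¹)) atTop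
          (nhds (Real.exp 0)) := (Real.continuous_exp.tendsto 0).comp h1
      simp only [Real.exp_zero] at h2
      refine h2.congr (fun n => ?_)
      rw [Real.rpow_def_of_pos hKpos]
    have hev2 : ∀ᶠ n : ℕ in atTop, K ^ ((n : ℝ))⁻¹ < 2 :=
      hroot.eventually (eventually_lt_nhds (by norm_num))
    have hevN : ∀ᶠ n : ℕ in atTop, max N 1 ≤ n := eventually_ge_atTop _
    have hev : ∀ᶠ n : ℕ in atTop, ‖ψ n‖ ^ ((n : ℝ))⁻¹ < ε := by
      filter_upwards [hev2, hevN] with n h2 hge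
      have hn1 : 1 ≤ n := le_trans (le_max_right _ _) hge
      have hnN : N ≤ n := le_trans (le_max_left _ _) hge
      have hn0 : (n:ℝ) ≠ 0 := by exact_mod_cast (by omega : n ≠ 0)
      have hb := hKey n hnN
      have hrle : ‖ψ n‖ ^ ((n : ℝ))⁻¹ ≤ (K * (ε/3) ^ n) ^ ((n : ℝ))⁻¹ :=
        Real.rpow_le_rpow (norm_nonneg _) hb (by positivity)
      have heq : (K * (ε/3) ^ n) ^ ((n : ℝ))⁻¹ = K ^ ((n : ℝ))⁻¹ * (ε/3) := by
        rw [Real.mul_rpow hKpos.le (by positivity), ← Real.rpow_natCast (ε/3) n,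
          ← Real.rpow_mul hδ.le, mul_inv_cancel₀ hn0, Real.rpow_one]
      have : ‖ψ n‖ ^ ((n : ℝ))⁻¹ ≤ K ^ ((n : ℝ))⁻¹ * (ε/3) := heq ▸ hrle
      calc ‖ψ n‖ ^ ((n : ℝ))⁻¹ ≤ K ^ ((n : ℝ))⁻¹ * (ε/3) := this
        _ < 2 * (ε/3) := by
            exact mul_lt_mul_of_pos_right h2 hδ
        _ < ε := by linarith
    obtain ⟨N', hN'⟩ := eventually_atTop.1 hev
    refine ⟨N', fun n hn => ?_⟩
    rw [Real.dist_eq, sub_zero, abs_of_nonneg (Real.rpow_nonneg (norm_nonneg _) _)]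
    exact hN' n hn
  refine ⟨htend, ?_⟩
  have h0 : Tendsto (fun n : ℕ => ENNReal.ofReal (‖ψ n‖ ^ ((n : ℝ))⁻¹)) atTop (nhds 0) := by
    have := (ENNReal.continuous_ofReal.tendsto 0).comp htend
    simpa [Function.comp_def] using this
  rw [h0.limsup_eq]
  exact ENNReal.inv_zero
end

section
/- Let A and B be continuous linear operators on a complex Hilbert space and define operators P_n by P₀ = I, P₁ = A, P_{n+1} = A P_n + n B P_{n-1} for n ≥ 1. Then the operator-valued series U(s) = Σ_{n≥0} (sⁿ/n!) P_n converges absolutely in operator norm for every s ∈ ℂ, and for real s the function s ↦ U(s) is differentiable with dU/ds = (A + sB) U(s) and U(0) = I. In particular U(s) ψ₀ equals the solution ψ(s) of dψ/ds = (A + sB)ψ with ψ(0) = ψ₀. -/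
lemma my_sqrt_mul_le_add_half {a b : ℝ} (ha : 0 ≤ a) (hb : 0 ≤ b) :
    Real.sqrt (a * b) ≤ (a + b) / 2 := by
  rw [Real.sqrt_mul ha]
  nlinarith [Real.sq_sqrt ha, Real.sq_sqrt hb, sq_nonneg (Real.sqrt a - Real.sqrt b),
    Real.sqrt_nonneg a, Real.sqrt_nonneg b]

lemma my_aux_summable {c : ℝ} (hc : 0 ≤ c) :
    Summable (fun n : ℕ => c ^ n / Real.sqrt n.factorial) := by
  have h1 : Summable (fun n : ℕ => ((2 * c ^ 2) ^ n / n.factorial + (1/2 : ℝ) ^ n) / 2) :=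
    ((Real.summable_pow_div_factorial _).add
      (summable_geometric_of_lt_one (by norm_num) (by norm_num))).div_const 2
  refine Summable.of_nonneg_of_le (fun n => by positivity) (fun n => ?_) h1
  have hfac : (0:ℝ) < (n.factorial : ℝ) := by positivity
  have key : c ^ n / Real.sqrt n.factorial
      = Real.sqrt ((2 * c ^ 2) ^ n / n.factorial * (1/2)^n) := by
    rw [show (2 * c ^ 2) ^ n / (n.factorial:ℝ) * (1/2)^n = (c^n)^2 / n.factorial by
      rw [mul_pow]; field_simp; ring_nf; rw [mul_assoc, ← mul_pow]; norm_num]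
    rw [Real.sqrt_div (by positivity), Real.sqrt_sq (by positivity)]
  rw [key]
  exact my_sqrt_mul_le_add_half (by positivity) (by positivity)

set_option maxHeartbeats 1000000 in
/-- With `P 0 = I`, `P 1 = A`, `P (n+1) = A P n + n B P (n-1)` for `n ≥ 1`,
the operator series `U(s) = ∑ (sⁿ/n!) P n` converges absolutely in operator norm for every
`s : ℂ`; for real `s` the function `U` is differentiable with `dU/ds = (A + sB) U(s)` and
`U(0) = I`, and `U(s) ψ₀` equals the solution `ψ(s)` of `dψ/ds = (A + sB) ψ` with
`ψ(0) = ψ₀`. -/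
theorem stmt_11 {H : Type*} [NormedAddCommGroup H] [InnerProductSpace ℂ H] [CompleteSpace H]
    (A B : H →L[ℂ] H)
    (P : ℕ → H →L[ℂ] H)
    (hP0 : P 0 = 1) (hP1 : P 1 = A)
    (hPrec : ∀ n : ℕ, 1 ≤ n → P (n + 1) = A ∘L P n + (n : ℂ) • (B ∘L P (n - 1))) :
    (∀ s : ℂ, Summable fun n : ℕ => ‖s‖ ^ n / n.factorial * ‖P n‖) ∧
    (∀ U : ℝ → H →L[ℂ] H,
      U = (fun s : ℝ => ∑' n : ℕ, ((s : ℂ) ^ n / n.factorial) • P n) →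
      U 0 = 1 ∧
      (∀ s : ℝ, HasDerivAt U ((A + (s : ℂ) • B) ∘L U s) s) ∧
      (∀ (ψ₀ : H) (ψ : ℝ → H), ψ 0 = ψ₀ →
        (∀ s : ℝ, HasDerivAt ψ ((A + (s : ℂ) • B) (ψ s)) s) →
        ∀ s : ℝ, U s ψ₀ = ψ s)) := by
  set M : ℝ := ‖A‖ + ‖B‖ + 1 with hM
  have hM1 : (1:ℝ) ≤ M := by have := norm_nonneg A; have := norm_nonneg B; simp [hM]; linarith
  have hM0 : (0:ℝ) < M := by linarith
  have hA : ‖A‖ ≤ M := by have := norm_nonneg B; simp [hM]; linarith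
  clear_value M
  -- the key growth bound ‖P n‖ ≤ M^n √(n!)
  have hPb : ∀ n : ℕ, ‖P n‖ ≤ M ^ n * Real.sqrt n.factorial := by
    have key : ∀ n : ℕ, ‖P n‖ ≤ M ^ n * Real.sqrt n.factorial ∧
        ‖P (n+1)‖ ≤ M ^ (n+1) * Real.sqrt (n+1).factorial := by
      intro n
      induction n with
      | zero =>
        constructor
        · rw [hP0]
          exact (ContinuousLinearMap.norm_id_le.trans (by simp) :
            ‖ContinuousLinearMap.id ℂ H‖ ≤ 1 * Real.sqrt (Nat.factorial 0)).trans_eq (by simp)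
        · rw [hP1]
          calc ‖A‖ ≤ M := hA
          _ = M ^ 1 * 1 := by ring
          _ ≤ M ^ 1 * Real.sqrt (Nat.factorial 1) := by
              simp [Nat.factorial]
      | succ n ih =>
        refine ⟨ih.2, ?_⟩
        have hrec := hPrec (n+1) (by omega)
        have hnn : ‖(((n+1:ℕ)) : ℂ)‖ = ((n:ℝ)+1) := by
          rw [Complex.norm_natCast]; push_cast; ring
        have h1 : ‖P (n+1+1)‖ ≤ ‖A‖ * ‖P (n+1)‖ + ((n:ℝ)+1) * (‖B‖ * ‖P n‖) := by
          rw [hrec]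
          simp only [Nat.add_sub_cancel]
          refine (norm_add_le _ _).trans ?_
          have e2 : ‖(((n+1:ℕ)) : ℂ) • (B ∘L P n)‖ = ((n:ℝ)+1) * ‖B ∘L P n‖ := by
            rw [norm_smul, hnn]
          rw [e2]
          have c1 := ContinuousLinearMap.opNorm_comp_le A (P (n+1))
          have c2 := ContinuousLinearMap.opNorm_comp_le B (P n)
          have hn0 : (0:ℝ) ≤ (n:ℝ)+1 := by positivity
          have := mul_le_mul_of_nonneg_left c2 hn0
          linarith
        set Z : ℝ := Real.sqrt (n+2).factorial with hZdef
        have hZ0 : 0 ≤ Z := Real.sqrt_nonneg _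
        have sqrt_mono : Real.sqrt (n+1).factorial ≤ Z := by
          apply Real.sqrt_le_sqrt
          exact_mod_cast Nat.factorial_le (by omega)
        have h2 : ((n:ℝ)+1) * Real.sqrt n.factorial ≤ Z := by
          have e : ((n:ℝ)+1) * Real.sqrt n.factorial
              = Real.sqrt (((n:ℝ)+1)^2 * n.factorial) := by
            rw [Real.sqrt_mul (by positivity), Real.sqrt_sq (by positivity)]
          rw [e]
          apply Real.sqrt_le_sqrt
          have e2 : ((n+2).factorial : ℝ) = (n+2) * ((n+1) * n.factorial) := by
            push_cast [Nat.factorial_succ]; ring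
          rw [e2]
          have hfn : (0:ℝ) ≤ n.factorial := by positivity
          nlinarith [Nat.cast_nonneg (α := ℝ) n]
        have hAB : ‖A‖ * M + ‖B‖ ≤ M^2 := by
          have h0A := norm_nonneg A; have h0B := norm_nonneg B
          nlinarith
        calc ‖P (n+1+1)‖ ≤ ‖A‖ * ‖P (n+1)‖ + ((n:ℝ)+1) * (‖B‖ * ‖P n‖) := h1
        _ ≤ ‖A‖ * (M ^ (n+1) * Z)
            + ‖B‖ * (M ^ n * (((n:ℝ)+1) * Real.sqrt n.factorial)) := by
            have b1 : ‖P (n+1)‖ ≤ M ^ (n+1) * Z := ih.2.trans (by gcongr)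
            have b2 : ((n:ℝ)+1) * (‖B‖ * ‖P n‖)
                ≤ ‖B‖ * (M ^ n * (((n:ℝ)+1) * Real.sqrt n.factorial)) := by
              have step : ((n:ℝ)+1) * ‖B‖ * ‖P n‖
                  ≤ ((n:ℝ)+1) * ‖B‖ * (M ^ n * Real.sqrt n.factorial) :=
                mul_le_mul_of_nonneg_left ih.1 (by positivity)
              linarith [step]
            exact add_le_add (mul_le_mul_of_nonneg_left b1 (norm_nonneg A)) b2
        _ ≤ ‖A‖ * (M ^ (n+1) * Z) + ‖B‖ * (M ^ n * Z) := by
            refine add_le_add_right (mul_le_mul_of_nonneg_left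
              (mul_le_mul_of_nonneg_left h2 (by positivity : (0:ℝ) ≤ M ^ n)) (norm_nonneg B)) _
        _ = (‖A‖ * M + ‖B‖) * (M ^ n * Z) := by ring
        _ ≤ M ^ 2 * (M ^ n * Z) := by
            have : (0:ℝ) ≤ M ^ n * Z := by positivity
            nlinarith
        _ = M ^ (n+1+1) * Z := by ring
    exact fun n => (key n).1
  -- summability of the norm series for any nonnegative real r
  have hsum_norm : ∀ r : ℝ, 0 ≤ r → Summable (fun n : ℕ => r ^ n / n.factorial * ‖P n‖) := by
    intro r hr
    refine Summable.of_nonneg_of_le (fun n => by positivity) (fun n => ?_)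
      (my_aux_summable (mul_nonneg hr hM0.le))
    have hfac : (0:ℝ) < (n.factorial : ℝ) := by positivity
    have hs0 : (0:ℝ) < Real.sqrt n.factorial := Real.sqrt_pos.2 hfac
    have hself : Real.sqrt n.factorial * Real.sqrt n.factorial = (n.factorial : ℝ) :=
      Real.mul_self_sqrt hfac.le
    calc r ^ n / n.factorial * ‖P n‖
        ≤ r ^ n / n.factorial * (M ^ n * Real.sqrt n.factorial) := by
          exact mul_le_mul_of_nonneg_left (hPb n) (by positivity)
    _ = (r * M) ^ n / Real.sqrt n.factorial := by
          rw [mul_pow]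
          field_simp
          linear_combination r ^ n * hself
  have hterm_norm : ∀ (s : ℂ) (n : ℕ),
      ‖((s : ℂ) ^ n / n.factorial) • P n‖ = ‖s‖ ^ n / n.factorial * ‖P n‖ := by
    intro s n
    rw [norm_smul, norm_div, norm_pow]
    congr 2
    simp
  have hsummable : ∀ s : ℂ, Summable (fun n : ℕ => ((s : ℂ) ^ n / n.factorial) • P n) := by
    intro s
    refine Summable.of_norm ?_
    have := hsum_norm ‖s‖ (norm_nonneg s)
    simpa [hterm_norm s] using this
  refine ⟨fun s => hsum_norm ‖s‖ (norm_nonneg s), ?_⟩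
  intro U hU
  -- U 0 = 1
  have hU0 : U 0 = 1 := by
    rw [hU]
    show (∑' n : ℕ, (((0:ℝ) : ℂ) ^ n / n.factorial) • P n) = 1
    rw [tsum_eq_single 0 (by
      intro n hn
      have hz : ((0:ℝ):ℂ) ^ n = 0 := by
        rw [show ((0:ℝ):ℂ) = 0 by norm_num]
        exact zero_pow hn
      simp [hz, hn])]
    simp [hP0]
  -- the derivative statement
  have hderiv : ∀ s : ℝ, HasDerivAt U ((A + (s : ℂ) • B) ∘L U s) s := by
    intro s
    have hR1 : (1:ℝ) ≤ |s| + 1 := by have := abs_nonneg s; linarith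
    have hR0 : (0:ℝ) < |s| + 1 := by linarith
    set R : ℝ := |s| + 1 with hR
    clear_value R
    have hg : ∀ (n : ℕ) (y : ℝ),
        HasDerivAt (fun t : ℝ => (((t:ℝ) : ℂ) ^ n / n.factorial) • P n)
          ((((n : ℂ) * ((y:ℝ) : ℂ) ^ (n-1)) / n.factorial) • P n) y := by
      intro n y
      have h1 : HasDerivAt (fun z : ℂ => z ^ n) ((n : ℂ) * ((y:ℝ) : ℂ) ^ (n - 1)) ((y:ℝ) : ℂ) :=
        hasDerivAt_pow n _
      have h2 : HasDerivAt (fun t : ℝ => ((t:ℝ):ℂ) ^ n) ((n : ℂ) * ((y:ℝ) : ℂ) ^ (n - 1)) y :=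
        h1.comp_ofReal
      exact (h2.div_const (n.factorial : ℂ)).smul_const (P n)
    have hu : Summable (fun n : ℕ => (2 * R * M) ^ n / Real.sqrt n.factorial) :=
      my_aux_summable (by positivity)
    have hbound : ∀ (n : ℕ) (y : ℝ), y ∈ Set.Ioo (-R) R →
        ‖(((n : ℂ) * ((y:ℝ) : ℂ) ^ (n-1)) / (n.factorial : ℂ)) • P n‖
          ≤ (2 * R * M) ^ n / Real.sqrt n.factorial := by
      intro n y hy
      have hyR : |y| ≤ R := by
        rw [abs_le]; exact ⟨hy.1.le, hy.2.le⟩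
      have hcoef : ‖((n : ℂ) * ((y:ℝ) : ℂ) ^ (n-1)) / (n.factorial : ℂ)‖
          = (n : ℝ) * |y| ^ (n-1) / n.factorial := by
        rw [norm_div, norm_mul, norm_pow]
        simp
      have hfac : (0:ℝ) < (n.factorial : ℝ) := by positivity
      have hs0 : (0:ℝ) < Real.sqrt n.factorial := Real.sqrt_pos.2 hfac
      have hself : Real.sqrt n.factorial * Real.sqrt n.factorial = (n.factorial : ℝ) :=
        Real.mul_self_sqrt hfac.le
      have step2 : (n : ℝ) * |y| ^ (n-1) ≤ (2 * R) ^ n := by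
        have hy1 : |y| ^ (n-1) ≤ R ^ (n-1) := by
          gcongr
        have hy2 : R ^ (n-1) ≤ R ^ n := pow_le_pow_right₀ hR1 (Nat.sub_le n 1)
        have hn2 : (n : ℝ) ≤ 2 ^ n := by
          exact_mod_cast (Nat.lt_two_pow_self (n := n)).le
        calc (n : ℝ) * |y| ^ (n-1) ≤ 2 ^ n * R ^ n :=
              mul_le_mul hn2 (hy1.trans hy2) (by positivity) (by positivity)
        _ = (2 * R) ^ n := by rw [mul_pow]
      calc ‖(((n : ℂ) * ((y:ℝ) : ℂ) ^ (n-1)) / (n.factorial : ℂ)) • P n‖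
          ≤ (n : ℝ) * |y| ^ (n-1) / n.factorial * (M ^ n * Real.sqrt n.factorial) := by
            rw [norm_smul, hcoef]
            exact mul_le_mul_of_nonneg_left (hPb n) (by positivity)
      _ ≤ (2 * R) ^ n / n.factorial * (M ^ n * Real.sqrt n.factorial) := by
          have hX : (0:ℝ) ≤ M ^ n * Real.sqrt n.factorial := by positivity
          gcongr
      _ = (2 * R * M) ^ n / Real.sqrt n.factorial := by
          rw [mul_pow 2 R, mul_pow (2*R) M, ← hself]
          rw [Real.sqrt_mul_self hs0.le]
          field_simp
          ring
    have hsIoo : s ∈ Set.Ioo (-R) R := by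
      constructor
      · rw [hR]; cases abs_cases s with
        | inl h => linarith [h.1]
        | inr h => linarith [h.1]
      · rw [hR]; cases abs_cases s with
        | inl h => linarith [h.1]
        | inr h => linarith [h.1]
    -- term-by-term differentiation
    have hds : HasDerivAt (fun t : ℝ => ∑' n : ℕ, (((t:ℝ) : ℂ) ^ n / n.factorial) • P n)
        (∑' n : ℕ, (((n : ℂ) * ((s:ℝ) : ℂ) ^ (n-1)) / n.factorial) • P n) s := by
      refine hasDerivAt_tsum_of_isPreconnected hu isOpen_Ioo (convex_Ioo _ _).isPreconnected
        (fun n y _ => hg n y) (fun n y hy => hbound n y hy) hsIoo ?_ hsIoo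
      exact hsummable ((s:ℝ) : ℂ)
    -- identify the sum of derivatives
    have Sg' : Summable (fun n : ℕ => (((n : ℂ) * ((s:ℝ) : ℂ) ^ (n-1)) / n.factorial) • P n) :=
      Summable.of_norm (Summable.of_nonneg_of_le (fun n => norm_nonneg _)
        (fun n => hbound n s hsIoo) hu)
    have recur : ∀ m : ℕ, P (m+1) = A ∘L P m + (m : ℂ) • (B ∘L P (m - 1)) := by
      intro m
      cases m with
      | zero => simp [hP0, hP1, ContinuousLinearMap.one_def]
      | succ k => exact hPrec (k+1) (by omega)
    have hfac_ne : ∀ m : ℕ, ((m.factorial : ℂ)) ≠ 0 := by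
      intro m; exact Nat.cast_ne_zero.2 m.factorial_ne_zero
    have e1 : ∀ m : ℕ, ((((m+1:ℕ) : ℂ) * ((s:ℝ) : ℂ) ^ ((m+1)-1)) / ((m+1:ℕ).factorial : ℂ)) • P ((m+1))
        = (((s:ℝ) : ℂ) ^ m / m.factorial) • P (m+1) := by
      intro m
      simp only [Nat.add_sub_cancel]
      congr 1
      have hfs : (((m+1:ℕ).factorial : ℂ)) = ((m+1:ℕ) : ℂ) * (m.factorial : ℂ) := by
        push_cast [Nat.factorial_succ]; ring
      have hne : ((m+1:ℕ) : ℂ) ≠ 0 := Nat.cast_ne_zero.2 (Nat.succ_ne_zero m)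
      rw [hfs, mul_div_mul_left _ _ hne]
    have S1 : Summable (fun m : ℕ => (((s:ℝ) : ℂ) ^ m / m.factorial) • P (m+1)) := by
      have := (summable_nat_add_iff 1).2 Sg'
      exact this.congr e1
    -- compL of A
    have hTA : Summable (fun m : ℕ => (((s:ℝ) : ℂ) ^ m / m.factorial) • (A ∘L P m)) := by
      refine Summable.of_norm_bounded (g := fun m => ‖A‖ * (|s| ^ m / m.factorial * ‖P m‖))
        ((hsum_norm |s| (abs_nonneg s)).mul_left ‖A‖) (fun m => ?_)
      rw [norm_smul]
      have h1 : ‖((s:ℝ) : ℂ) ^ m / (m.factorial : ℂ)‖ = |s| ^ m / m.factorial := by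
        rw [norm_div, norm_pow, Complex.norm_real, Real.norm_eq_abs]
        congr 1
        simp
      rw [h1]
      have h2 : ‖A ∘L P m‖ ≤ ‖A‖ * ‖P m‖ := ContinuousLinearMap.opNorm_comp_le _ _
      have h3 : (0:ℝ) ≤ |s| ^ m / m.factorial := by positivity
      calc |s| ^ m / m.factorial * ‖A ∘L P m‖ ≤ |s| ^ m / m.factorial * (‖A‖ * ‖P m‖) :=
            mul_le_mul_of_nonneg_left h2 h3
      _ = ‖A‖ * (|s| ^ m / m.factorial * ‖P m‖) := by ring
    have hS3 : Summable (fun m : ℕ =>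
        (((s:ℝ) : ℂ) ^ m / m.factorial) • ((m : ℂ) • (B ∘L P (m - 1)))) := by
      refine (S1.sub hTA).congr ?_
      intro m
      rw [recur m, smul_add]
      abel
    have key1 : (∑' m : ℕ, (((s:ℝ) : ℂ) ^ m / m.factorial) • (A ∘L P m)) = A ∘L U s := by
      have := (ContinuousLinearMap.compL ℂ H H H A).map_tsum (hsummable ((s:ℝ):ℂ))
      rw [hU]
      refine Eq.trans (tsum_congr ?_) this.symm
      intro m
      rw [map_smul, ContinuousLinearMap.compL_apply]
    have key2 : (∑' m : ℕ, (((s:ℝ) : ℂ) ^ m / m.factorial) • ((m : ℂ) • (B ∘L P (m - 1))))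
        = ((s : ℂ) • B) ∘L U s := by
      rw [Summable.tsum_eq_zero_add hS3]
      have h0 : ((((s:ℝ) : ℂ) ^ 0 / (0:ℕ).factorial) • (((0:ℕ) : ℂ) • (B ∘L P (0 - 1)))) = 0 := by
        simp
      rw [h0, zero_add]
      have e2 : ∀ k : ℕ, ((((s:ℝ) : ℂ) ^ (k+1) / (k+1:ℕ).factorial) • (((k+1:ℕ) : ℂ) • (B ∘L P ((k+1) - 1))))
          = ((s:ℝ) : ℂ) • (ContinuousLinearMap.compL ℂ H H H B ((((s:ℝ):ℂ) ^ k / k.factorial) • P k)) := by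
        intro k
        simp only [Nat.add_sub_cancel]
        rw [smul_smul, map_smul, smul_smul, ContinuousLinearMap.compL_apply]
        congr 1
        have hfs : (((k+1:ℕ).factorial : ℂ)) = ((k+1:ℕ) : ℂ) * (k.factorial : ℂ) := by
          push_cast [Nat.factorial_succ]; ring
        have hne : ((k+1:ℕ) : ℂ) ≠ 0 := Nat.cast_ne_zero.2 (Nat.succ_ne_zero k)
        have hkf : ((k.factorial : ℂ)) ≠ 0 := hfac_ne k
        have hne2 : ((k:ℂ) * k.factorial + k.factorial) ≠ 0 := by
          have he : ((k:ℂ) * k.factorial + k.factorial) = ((k+1:ℕ):ℂ) * k.factorial := by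
            push_cast; ring
          rw [he]; exact mul_ne_zero hne hkf
        rw [hfs, pow_succ]
        field_simp [hne2]
      rw [tsum_congr e2]
      rw [tsum_const_smul'' (((s:ℝ)) : ℂ)]
      rw [← (ContinuousLinearMap.compL ℂ H H H B).map_tsum (hsummable ((s:ℝ):ℂ))]
      rw [hU]
      ext x
      simp [ContinuousLinearMap.smul_comp]
    have hsum_eq : (∑' n : ℕ, (((n : ℂ) * ((s:ℝ) : ℂ) ^ (n-1)) / n.factorial) • P n)
        = (A + (s : ℂ) • B) ∘L U s := by
      rw [Summable.tsum_eq_zero_add Sg']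
      have h0 : ((((0:ℕ) : ℂ) * ((s:ℝ) : ℂ) ^ (0-1)) / ((0:ℕ).factorial : ℂ)) • P 0 = 0 := by
        simp
      rw [h0, zero_add, tsum_congr e1]
      rw [tsum_congr (fun m => by rw [recur m, smul_add])]
      rw [Summable.tsum_add hTA hS3, key1, key2]
      rw [ContinuousLinearMap.add_comp]
    rw [← hsum_eq, hU]
    exact hds
  refine ⟨hU0, hderiv, ?_⟩
  -- uniqueness of the ODE solution
  intro ψ₀ ψ hψ0 hψ' s
  have hUcont : Continuous U := by
    rw [continuous_iff_continuousAt]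
    exact fun t => (hderiv t).continuousAt
  -- f t := U t ψ₀
  have hfd : ∀ t : ℝ, HasDerivAt (fun r : ℝ => U r ψ₀) ((A + (t : ℂ) • B) (U t ψ₀)) t := by
    intro t
    have hev := ((ContinuousLinearMap.apply ℂ H ψ₀).restrictScalars ℝ).hasFDerivAt
      (x := U t)
    have := hev.comp_hasDerivAt t (hderiv t)
    simpa [Function.comp_def] using this
  have hc1 : (1:ℝ) ≤ |s| + 1 := by have := abs_nonneg s; linarith
  set c : ℝ := |s| + 1 with hc
  clear_value c
  have hc0 : (0:ℝ) < c := by linarith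
  set K : NNReal := Real.toNNReal (‖A‖ + c * ‖B‖) with hK
  have hKcoe : (K : ℝ) = ‖A‖ + c * ‖B‖ := by
    rw [hK, Real.coe_toNNReal]
    positivity
  set v : ℝ → H → H := fun t x => (A + ((max (-c) (min c t) : ℝ) : ℂ) • B) x with hv
  have hclamp_mem : ∀ t : ℝ, |max (-c) (min c t)| ≤ c := by
    intro t
    rw [abs_le]
    constructor
    · exact le_max_left _ _
    · exact max_le (by linarith) ((min_le_left _ _))
  have hclamp_eq : ∀ t : ℝ, t ∈ Set.Icc (-c) c → max (-c) (min c t) = t := by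
    intro t ht
    rw [min_eq_right ht.2, max_eq_right ht.1]
  have hvL : ∀ t : ℝ, LipschitzWith K (v t) := by
    intro t
    set z : ℝ := max (-c) (min c t) with hz
    have h1 : LipschitzWith ‖A + (z : ℂ) • B‖₊ (v t) := (A + (z : ℂ) • B).lipschitz
    refine h1.weaken ?_
    rw [← NNReal.coe_le_coe, coe_nnnorm, hKcoe]
    refine (norm_add_le _ _).trans ?_
    have : ‖(z : ℂ) • B‖ = |z| * ‖B‖ := by
      rw [norm_smul, Complex.norm_real, Real.norm_eq_abs]
    rw [this]
    have := hclamp_mem t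
    have h0B := norm_nonneg B
    nlinarith
  have hs_mem : s ∈ Set.Icc (-c) c := by
    rw [Set.mem_Icc]
    cases abs_cases s with
    | inl h => constructor <;> linarith [h.1]
    | inr h => constructor <;> linarith [h.1]
  have h0_mem : (0:ℝ) ∈ Set.Ioo (-c) c := by
    constructor <;> simp [hc] <;> linarith [abs_nonneg s]
  have hpsicont : Continuous ψ := by
    rw [continuous_iff_continuousAt]
    exact fun t => (hψ' t).continuousAt
  have heq0 : U 0 ψ₀ = ψ 0 := by
    rw [hU0, hψ0]
    rfl
  have := ODE_solution_unique_of_mem_Icc (v := v) (s := fun _ => Set.univ) (K := K)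
    (fun t _ => (hvL t).lipschitzOnWith) h0_mem
    ((hUcont.clm_apply continuous_const).continuousOn)
    (fun t ht => by
      have := hfd t
      have he : v t (U t ψ₀) = (A + (t : ℂ) • B) (U t ψ₀) := by
        rw [hv]
        simp only []
        rw [hclamp_eq t (Set.mem_Icc.2 ⟨ht.1.le, ht.2.le⟩)]
      rw [he]
      exact this)
    (fun _ _ => Set.mem_univ _)
    hpsicont.continuousOn
    (fun t ht => by
      have := hψ' t
      have he : v t (ψ t) = (A + (t : ℂ) • B) (ψ t) := by
        rw [hv]
        simp only []
        rw [hclamp_eq t (Set.mem_Icc.2 ⟨ht.1.le, ht.2.le⟩)]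
      rw [he]
      exact this)
    (fun _ _ => Set.mem_univ _)
    heq0
  exact this hs_mem
end
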